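/- Let (M, ∘, e) be an F-manifold of dimension n, X₀ a vector field whose ∘-powers {X₀, …, X₀ⁿ} form a frame of TM, and let S̃ be the special family of all torsion-free, ∘-compatible connections satisfying ∇̃_Y(X₀)∘Z = ∇̃_Z(X₀)∘Y. Let ε be an eventual identity with dual multiplication X*Y := X∘Y∘ε^{-1}. Then the dual family D_ε(S̃) equals the special family of all compatible, torsion-free connections ∇ on the dual F-manifold (M, *, ε) satisfying ∇_Y(ε∘X₀) * Z = ∇_Z(ε∘X₀) * Y for all vector fields Y, Z. -/

import Mathlib

/-- An algebraic model of the geometric setting of the paper: `R` plays the role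
of the ring `C^∞(M)` of smooth functions on a manifold `M`, and `V` plays the
role of the `C^∞(M)`-module of smooth vector fields on `M`, equipped with its
Lie bracket and with the action of vector fields on functions by derivations. -/
structure SmoothSetting (R V : Type*) [CommRing R] [LieRing V] [Module R V] where
  /-- the action `X(f)` of a vector field `X` on a function `f` -/
  deriv : V → R → R
  deriv_add : ∀ (X : V) (f g : R), deriv X (f + g) = deriv X f + deriv X g
  deriv_mul : ∀ (X : V) (f g : R), deriv X (f * g) = deriv X f * g + f * deriv X g
  add_deriv : ∀ (X Y : V) (f : R), deriv (X + Y) f = deriv X f + deriv Y f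
  smul_deriv : ∀ (f : R) (X : V) (g : R), deriv (f • X) g = f * deriv X g
  bracket_deriv : ∀ (X Y : V) (f : R),
    deriv ⁅X, Y⁆ f = deriv X (deriv Y f) - deriv Y (deriv X f)
  bracket_smul : ∀ (X : V) (f : R) (Y : V), ⁅X, f • Y⁆ = f • ⁅X, Y⁆ + deriv X f • Y

/-- `(m, e)` is an F-manifold structure: `m` is a fiber-preserving (i.e.
`C^∞(M)`-bilinear) commutative associative multiplication on vector fields with
unit field `e`, satisfying the Hertling–Manin integrability condition
`L_{X∘Y}(∘) = X ∘ L_Y(∘) + Y ∘ L_X(∘)`. -/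
structure IsFManifold (R : Type*) {V : Type*} [CommRing R] [LieRing V] [Module R V]
    (m : V → V → V) (e : V) : Prop where
  add_left : ∀ X Y Z : V, m (X + Y) Z = m X Z + m Y Z
  smul_left : ∀ (f : R) (X Y : V), m (f • X) Y = f • m X Y
  comm : ∀ X Y : V, m X Y = m Y X
  assoc : ∀ X Y Z : V, m (m X Y) Z = m X (m Y Z)
  unit : ∀ X : V, m e X = X
  hertling_manin : ∀ X Y Z W : V,
    ⁅m X Y, m Z W⁆ - m ⁅m X Y, Z⁆ W - m Z ⁅m X Y, W⁆ =
      m X (⁅Y, m Z W⁆ - m ⁅Y, Z⁆ W - m Z ⁅Y, W⁆)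
        + m Y (⁅X, m Z W⁆ - m ⁅X, Z⁆ W - m Z ⁅X, W⁆)

/-- The dual multiplication `X * Y := X ∘ Y ∘ ε⁻¹` determined by an invertible
vector field `ε` with inverse `εinv`. -/
def dualMul {V : Type*} (m : V → V → V) (εinv : V) : V → V → V :=
  fun X Y => m (m X Y) εinv

/-- `ε` (with inverse `εinv`) is an eventual identity on the F-manifold `(m, e)`:
it is invertible and the dual multiplication `X * Y = X ∘ Y ∘ ε⁻¹` defines an
F-manifold structure on `M` with unit field `ε`. -/
def IsEventualIdentity (R : Type*) {V : Type*} [CommRing R] [LieRing V] [Module R V]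
    (m : V → V → V) (e ε εinv : V) : Prop :=
  m ε εinv = e ∧ IsFManifold R (dualMul m εinv) ε

/-- `nabla` is a (Koszul) connection on the tangent bundle, i.e. on vector fields. -/
structure IsConnection {R V : Type*} [CommRing R] [LieRing V] [Module R V]
    (S : SmoothSetting R V) (nabla : V → V → V) : Prop where
  add_left : ∀ X Y Z : V, nabla (X + Y) Z = nabla X Z + nabla Y Z
  smul_left : ∀ (f : R) (X Y : V), nabla (f • X) Y = f • nabla X Y
  add_right : ∀ X Y Z : V, nabla X (Y + Z) = nabla X Y + nabla X Z
  leibniz : ∀ (X : V) (f : R) (Y : V), nabla X (f • Y) = S.deriv X f • Y + f • nabla X Y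

/-- `nabla` is torsion-free. -/
def IsTorsionFree {V : Type*} [LieRing V] (nabla : V → V → V) : Prop :=
  ∀ X Y, nabla X Y - nabla Y X = ⁅X, Y⁆

/-- The covariant derivative `∇_X(∘)(Y, Z)` of a multiplication `m` with respect
to a connection `nabla`. -/
def covMul {V : Type*} [LieRing V] (nabla m : V → V → V) (X Y Z : V) : V :=
  nabla X (m Y Z) - m (nabla X Y) Z - m Y (nabla X Z)

/-- `nabla` is compatible with the multiplication `m`: the vector valued tensor
`∇(∘)` is totally symmetric. -/
def IsCompatible {V : Type*} [LieRing V] (nabla m : V → V → V) : Prop :=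
  ∀ X Y Z, covMul nabla m X Y Z = covMul nabla m Y X Z ∧
    covMul nabla m X Y Z = covMul nabla m X Z Y

/-- The curvature `R^∇_{X,Y}Z = ∇_X∇_Y Z − ∇_Y∇_X Z − ∇_{[X,Y]}Z`. -/
def curv {V : Type*} [LieRing V] (nabla : V → V → V) (X Y Z : V) : V :=
  nabla X (nabla Y Z) - nabla Y (nabla X Z) - nabla ⁅X, Y⁆ Z

/-- `nabla` is flat. -/
def IsFlat {V : Type*} [LieRing V] (nabla : V → V → V) : Prop :=
  ∀ X Y Z, curv nabla X Y Z = 0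

/-- The curvature condition
`V∘R_{Z,Y}X + Y∘R_{V,Z}X + Z∘R_{Y,V}X = 0` of Lorenzoni–Pedroni. -/
def CurvCircCond {V : Type*} [LieRing V] (m nabla : V → V → V) : Prop :=
  ∀ X Y Z W, m W (curv nabla Z Y X) + m Y (curv nabla W Z X)
    + m Z (curv nabla Y W X) = 0

/-- A special family of connections on the F-manifold `(m, e)`: the family of
all `∇̃^V_X(Y) = ∇̃_X(Y) + V∘X∘Y`, `V` a vector field, where `∇̃` is some
torsion-free connection compatible with `m`. -/
def IsSpecialFamily {R V : Type*} [CommRing R] [LieRing V] [Module R V]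
    (S : SmoothSetting R V) (m : V → V → V) (SF : Set (V → V → V)) : Prop :=
  ∃ nt : V → V → V, IsConnection S nt ∧ IsTorsionFree nt ∧ IsCompatible nt m ∧
    SF = { n | ∃ W : V, n = fun X Y => nt X Y + m (m W X) Y }

/-- The connection `∇^W_X(Y) = ε∘∇̃_X(ε⁻¹∘Y) − ∇̃_{ε⁻¹∘Y}(ε)∘X + W*X*Y` on the
dual F-manifold, where `*` is the dual multiplication. -/
def dualConn {V : Type*} [LieRing V] (m : V → V → V) (ε εinv : V)
    (nt : V → V → V) (W : V) : V → V → V :=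
  fun X Y => m ε (nt X (m εinv Y)) - m (nt (m εinv Y) ε) X
    + dualMul m εinv (dualMul m εinv W X) Y

/-- The dual family `D_ε(S̃)` built from a chosen connection `nt ∈ S̃`. -/
def dualFamily {V : Type*} [LieRing V] (m : V → V → V) (ε εinv : V)
    (nt : V → V → V) : Set (V → V → V) :=
  { n | ∃ W : V, n = dualConn m ε εinv nt W }

/-- The dual family `D_ε(S̃)` of a family of connections `S̃`. -/
def dualFamilyOfSet {V : Type*} [LieRing V] (m : V → V → V) (ε εinv : V)
    (SF : Set (V → V → V)) : Set (V → V → V) :=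
  { n | ∃ nt ∈ SF, ∃ W : V, n = dualConn m ε εinv nt W }

/-- The second structure connection
`∇^F_X(Y) = ε∘∇̃_X(ε⁻¹∘Y) − ∇̃_{ε⁻¹∘Y}(ε)∘X` of `(M, ∘, e, ε, ∇̃)`. -/
def secondConn {V : Type*} [LieRing V] (m : V → V → V) (ε εinv : V)
    (nt : V → V → V) : V → V → V :=
  fun X Y => m ε (nt X (m εinv Y)) - m (nt (m εinv Y) ε) X

/-- The connection
`∇_X(Y) = ε∘∇̃_X(ε⁻¹∘Y) − ∇̃_{ε⁻¹∘Y}(ε)∘X + (1/2)[ε⁻¹,ε]∘X∘Y + U*X*Y`. -/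
def uDualConn {V : Type*} [LieRing V] [Module ℚ V] (m : V → V → V)
    (ε εinv U : V) (nt : V → V → V) : V → V → V :=
  fun X Y => secondConn m ε εinv nt X Y + (2 : ℚ)⁻¹ • m (m ⁅εinv, ε⁆ X) Y
    + dualMul m εinv (dualMul m εinv U X) Y

/-- The `k`-th power `X^k` of a vector field with respect to the multiplication
`m` with unit `e`. -/
def mpow {V : Type*} (m : V → V → V) (e X : V) : ℕ → V
  | 0 => e
  | k + 1 => m X (mpow m e X k)

/-- The Legendre transformation `L_u(S̃) = { u⁻¹∘∇̃_X(u∘Y) : ∇̃ ∈ S̃ }` of a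
family of connections `S̃` by an invertible vector field `u` (with inverse
`uinv`). -/
def legFamily {V : Type*} (m : V → V → V) (uinv u : V)
    (SF : Set (V → V → V)) : Set (V → V → V) :=
  { n | ∃ nt ∈ SF, n = fun X Y => m uinv (nt X (m u Y)) }

@[reducible]
private def fmRing {R V : Type*} [CommRing R] [LieRing V] [Module R V] {m : V → V → V} {e : V}
    (hF : IsFManifold R m e) : CommRing V :=
  { (inferInstance : AddCommGroup V) with
    mul := m
    one := e
    mul_assoc := hF.assoc
    mul_comm := hF.comm
    one_mul := hF.unit
    mul_one := fun X => by show m X e = X; rw [hF.comm]; exact hF.unit X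
    left_distrib := fun X Y Z => by
      show m X (Y + Z) = m X Y + m X Z
      rw [hF.comm X (Y + Z), hF.add_left, hF.comm Y X, hF.comm Z X]
    right_distrib := fun X Y Z => hF.add_left X Y Z
    zero_mul := fun X => by
      show m 0 X = 0
      have h := hF.add_left 0 0 X
      rw [add_zero] at h
      exact (left_eq_add.mp h)
    mul_zero := fun X => by
      show m X 0 = 0
      rw [hF.comm X 0]
      have h2 := hF.add_left 0 0 X
      rw [add_zero] at h2
      exact (left_eq_add.mp h2) }

/-- Forward direction: the dual connections of a member of the special family `S̃`
satisfy all four defining properties of the dual special family. -/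
private lemma forward_aux {R V : Type*} [CommRing R] [LieRing V] [Module R V]
    (S : SmoothSetting R V) (m : V → V → V) (e ε c : V)
    (hF : IsFManifold R m e) (hev1 : m ε c = e) (hev2 : IsFManifold R (dualMul m c) ε)
    (X0 : V) (nt : V → V → V) (hc : IsConnection S nt) (htf : IsTorsionFree nt)
    (hcomp : IsCompatible nt m) (hx0 : ∀ Y Z, m (nt Y X0) Z = m (nt Z X0) Y) (W : V) :
    IsConnection S (dualConn m ε c nt W) ∧ IsTorsionFree (dualConn m ε c nt W) ∧
      IsCompatible (dualConn m ε c nt W) (dualMul m c) ∧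
      ∀ Y Z, dualMul m c (dualConn m ε c nt W Y (m ε X0)) Z =
        dualMul m c (dualConn m ε c nt W Z (m ε X0)) Y := by
  have madd_r : ∀ X Y Z : V, m X (Y + Z) = m X Y + m X Z := fun X Y Z => by
    rw [hF.comm X (Y+Z), hF.add_left, hF.comm Y X, hF.comm Z X]
  have msmul_r : ∀ (f : R) (X Y : V), m X (f • Y) = f • m X Y := fun f X Y => by
    rw [hF.comm X (f • Y), hF.smul_left, hF.comm Y X]
  have hcolm : ∀ U : V, m ε (m c U) = U := fun U => by
    rw [← hF.assoc, hev1, hF.unit]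
  letI : CommRing V := fmRing hF
  have hm : ∀ X Y : V, m X Y = X * Y := fun _ _ => rfl
  have hε : ε * c = 1 := hev1
  have hcol : ∀ U : V, ε * (c * U) = U := fun U => by linear_combination U * hε
  have cancel : ∀ t : V, t = ε * t * c + ε * t * c → t = 0 := by
    intro t ht
    have h1 : ε * t * c = t := by linear_combination t * hε
    rw [h1] at ht
    exact left_eq_add.mp ht
  have Lstar : ∀ Z W' : V, ⁅ε, Z * W' * c⁆ = ⁅ε, Z⁆ * W' * c + Z * ⁅ε, W'⁆ * c := by
    intro Z W'
    have h := hev2.hertling_manin ε ε Z W'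
    simp only [dualMul, hm] at h
    rw [show ε * ε * c = ε from by linear_combination ε * hε] at h
    have h0 := cancel _ h
    linear_combination h0
  have EI : ∀ A B : V, ⁅ε, A * B⁆ = ⁅ε, A⁆ * B + A * ⁅ε, B⁆ - A * B * ⁅ε, (1:V)⁆ := by
    intro A B
    have h1 := Lstar A (ε * B)
    rw [show A * (ε * B) * c = A * B from by linear_combination A * B * hε] at h1
    have h2 := Lstar (ε * B) 1
    rw [show ε * B * 1 * c = B from by linear_combination B * hε] at h2
    linear_combination h1 - A * h2 + (⁅ε, A⁆ * B - A * B * ⁅ε, (1:V)⁆) * hε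
  have sym13 : ∀ A B C, covMul nt m A B C = covMul nt m C B A := fun A B C => by
    rw [(hcomp A B C).1, (hcomp B A C).2, (hcomp B C A).1]
  have tf2 : ∀ A, nt A ε = nt ε A - ⁅ε, A⁆ := fun A => by
    have h := htf A ε
    have sk : ⁅A, ε⁆ = -⁅ε, A⁆ := (lie_skew A ε).symm
    linear_combination h + sk
  refine ⟨?_, ?_, ?_, ?_⟩
  · -- a connection
    constructor
    · intro X Y Z
      simp only [dualConn, dualMul, hc.add_left, hF.add_left, madd_r]
      abel
    · intro f X Y
      simp only [dualConn, dualMul, hc.smul_left, hF.smul_left, msmul_r, smul_sub, smul_add]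
    · intro X Y Z
      simp only [dualConn, dualMul, madd_r, hc.add_right, hc.add_left, hF.add_left]
      abel
    · intro X f Y
      simp only [dualConn, dualMul, msmul_r, hc.leibniz, hc.smul_left, hF.smul_left,
        madd_r, hF.add_left, smul_sub, smul_add, hcolm]
      abel
  · -- torsion-free
    have k7 : ∀ a b : V,
        ε * (ε * ⁅b, a⁆) + ε * ⁅ε * a, b⁆ - ε * ⁅ε * b, a⁆ = ⁅ε * a, ε * b⁆ := by
      intro a b
      have h := hF.hertling_manin ε a ε b
      simp only [hm] at h
      have sk1 : ⁅ε * a, ε⁆ = -⁅ε, ε * a⁆ := (lie_skew (ε * a) ε).symm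
      have sk2 : ⁅a, ε⁆ = -⁅ε, a⁆ := (lie_skew a ε).symm
      have sk3 : ⁅b, a⁆ = -⁅a, b⁆ := (lie_skew b a).symm
      have sk4 : ⁅ε * b, a⁆ = -⁅a, ε * b⁆ := (lie_skew (ε * b) a).symm
      have sk5 : ⁅ε, ε⁆ = (0 : V) := lie_self ε
      rw [sk1, sk2, sk5] at h
      rw [sk3, sk4]
      have EIa := EI ε a
      have EIb := EI ε b
      rw [sk5] at EIa EIb
      linear_combination -h + b * EIa - a * EIb
    intro X Y
    simp only [dualConn, dualMul, hm]
    set a := c * X with ha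
    set b := c * Y with hb
    have hXa : X = ε * a := by rw [ha]; exact (hcol X).symm
    have hYb : Y = ε * b := by rw [hb]; exact (hcol Y).symm
    rw [hXa, hYb]
    have k1 : nt (ε*a) b = nt b (ε*a) + ⁅ε*a, b⁆ := by linear_combination htf (ε*a) b
    have k2 : nt (ε*b) a = nt a (ε*b) + ⁅ε*b, a⁆ := by linear_combination htf (ε*b) a
    have k3 : nt b (ε*a) = covMul nt m b ε a + nt b ε * a + ε * nt b a := by
      simp only [covMul, hm]; ring
    have k4 : nt a (ε*b) = covMul nt m a ε b + nt a ε * b + ε * nt a b := by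
      simp only [covMul, hm]; ring
    have k5 : covMul nt m b ε a = covMul nt m a ε b := by
      rw [(hcomp b ε a).1, (hcomp ε b a).2, (hcomp ε a b).1]
    have k6 : nt b a = nt a b + ⁅b, a⁆ := by linear_combination htf b a
    linear_combination ε * k1 + ε * k3 + ε * k5 - ε * k2 - ε * k4 + ε * ε * k6 + k7 a b
  · -- compatible with the dual multiplication
    intro X Y Z
    constructor
    · simp only [covMul, dualConn, dualMul, hm]
      rw [show c * (Y * Z * c) = c * Y * (c * Z) from by ring,
          show c * (X * Z * c) = c * X * (c * Z) from by ring]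
      set p := c * X with hp
      set q := c * Y with hq
      set r := c * Z with hr
      have hXp : X = ε * p := by rw [hp]; exact (hcol X).symm
      have hYq : Y = ε * q := by rw [hq]; exact (hcol Y).symm
      have hZr : Z = ε * r := by rw [hr]; exact (hcol Z).symm
      rw [hXp, hYq, hZr]
      have s1L : nt (ε*p) (q*r) - nt (ε*p) q * r - q * nt (ε*p) r
          = nt r (q*(ε*p)) - nt r q * (ε*p) - q * nt r (ε*p) := by
        have h := sym13 (ε*p) q r
        simp only [covMul, hm] at h
        exact h
      have s1R : nt (ε*q) (p*r) - nt (ε*q) p * r - p * nt (ε*q) r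
          = nt r (p*(ε*q)) - nt r p * (ε*q) - p * nt r (ε*q) := by
        have h := sym13 (ε*q) p r
        simp only [covMul, hm] at h
        exact h
      have s2L : nt ε (q*r) - nt ε q * r - q * nt ε r
          = nt r (q*ε) - nt r q * ε - q * nt r ε := by
        have h := sym13 ε q r
        simp only [covMul, hm] at h
        exact h
      have s2R : nt ε (p*r) - nt ε p * r - p * nt ε r
          = nt r (p*ε) - nt r p * ε - p * nt r ε := by
        have h := sym13 ε p r
        simp only [covMul, hm] at h
        exact h
      have hE2L : nt (q*r) ε - r * nt q ε - q * nt r ε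
          = nt r (q*ε) - nt r q * ε - q * nt r ε + q*r*⁅ε,(1:V)⁆ := by
        linear_combination tf2 (q*r) - r * tf2 q - q * tf2 r - EI q r + s2L
      have hE2R : nt (p*r) ε - r * nt p ε - p * nt r ε
          = nt r (p*ε) - nt r p * ε - p * nt r ε + p*r*⁅ε,(1:V)⁆ := by
        linear_combination tf2 (p*r) - r * tf2 p - p * tf2 r - EI p r + s2R
      linear_combination (norm := ring_nf) ε*s1L - ε*s1R - (ε*p)*hE2L + (ε*q)*hE2R
        + ((-(ε*r)*(nt (ε*p) q) + (ε*p*r)*(nt q ε) - (ε*q)*(nt (ε*p) r) + (ε*p*q)*(nt r ε))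
          - (-(ε*r)*(nt (ε*q) p) + (ε*q*r)*(nt p ε) - (ε*p)*(nt (ε*q) r)
            + (ε*p*q)*(nt r ε)))*hε
    · simp only [covMul, dualConn, dualMul, hm]
      rw [show Z * Y * c = Y * Z * c from by ring]
      ring
  · -- the condition on ε ∘ X0
    intro Y Z
    simp only [dualConn, dualMul, hm]
    rw [show c * (ε * X0) = c * ε * X0 from by ring]
    rw [show c * ε * X0 = X0 from by linear_combination X0 * hε]
    have h := hx0 Y Z
    simp only [hm] at h
    linear_combination (ε * c) * h

/-- A connection in the special family determined by `nd0` differs from `nd0` by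
a tensor `W ∘ X ∘ Y`, thanks to the frame of powers of `X0'`. -/
private lemma special_diff {R V : Type*} [CommRing R] [LieRing V] [Module R V]
    (S : SmoothSetting R V) (m' : V → V → V) (e' : V) (hF' : IsFManifold R m' e')
    (n : ℕ) (X0' : V) (b : Module.Basis (Fin n) R V)
    (hb : ∀ i : Fin n, b i = mpow m' e' X0' ((i : ℕ) + 1))
    (nd0 nd : V → V → V)
    (h0 : IsConnection S nd0) (h0t : IsTorsionFree nd0) (h0c : IsCompatible nd0 m')
    (h0x : ∀ Y Z, m' (nd0 Y X0') Z = m' (nd0 Z X0') Y)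
    (h1 : IsConnection S nd) (h1t : IsTorsionFree nd) (h1c : IsCompatible nd m')
    (h1x : ∀ Y Z, m' (nd Y X0') Z = m' (nd Z X0') Y) :
    ∃ Wd : V, ∀ X Y, nd X Y = nd0 X Y + m' (m' Wd X) Y := by
  letI : CommRing V := fmRing hF'
  have hm' : ∀ X Y : V, m' X Y = X * Y := fun _ _ => rfl
  have he' : e' = (1 : V) := rfl
  have madd_r : ∀ X Y Z : V, m' X (Y + Z) = m' X Y + m' X Z := fun X Y Z => by
    show X * (Y + Z) = X * Y + X * Z; ring
  have msmul_r : ∀ (f : R) (X Y : V), m' X (f • Y) = f • m' X Y := fun f X Y => by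
    rw [hF'.comm X (f • Y), hF'.smul_left, hF'.comm Y X]
  have hA : ∀ Y, nd Y X0' - nd0 Y X0' = (nd (1:V) X0' - nd0 (1:V) X0') * Y := by
    intro Y
    have u1 := h1x Y e'
    have u0 := h0x Y e'
    rw [he'] at u1 u0
    simp only [hm'] at u1 u0
    linear_combination u1 - u0
  set A := nd (1:V) X0' - nd0 (1:V) X0' with hAdef
  have hDx : ∀ U, nd X0' U - nd0 X0' U = A * U := by
    intro U
    have d1 := h1t X0' U
    have d0 := h0t X0' U
    linear_combination hA U + d1 - d0
  set J := ∑ i : Fin n, b.repr (1:V) i • mpow m' e' X0' (i : ℕ) with hJdef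
  have hJ : X0' * J = (1 : V) := by
    have e1 : X0' * J = ∑ i : Fin n, b.repr (1:V) i • b i := by
      rw [hJdef, Finset.mul_sum]
      refine Finset.sum_congr rfl fun i _ => ?_
      rw [hb i]
      calc X0' * (b.repr (1:V) i • mpow m' e' X0' (i : ℕ))
          = (b.repr (1:V) i • mpow m' e' X0' (i : ℕ)) * X0' := mul_comm _ _
        _ = b.repr (1:V) i • (mpow m' e' X0' (i : ℕ) * X0') := hF'.smul_left _ _ _
        _ = b.repr (1:V) i • (X0' * mpow m' e' X0' (i : ℕ)) := by
              rw [mul_comm (mpow m' e' X0' (i : ℕ)) X0']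
        _ = b.repr (1:V) i • mpow m' e' X0' ((i : ℕ) + 1) := rfl
    rw [e1]
    exact b.sum_repr 1
  set Wd := A * J with hWdef
  have hWX : Wd * X0' = A := by rw [hWdef]; linear_combination A * hJ
  have hpow : ∀ k : ℕ, ∀ X, nd X (mpow m' e' X0' (k+1)) - nd0 X (mpow m' e' X0' (k+1))
      = Wd * X * mpow m' e' X0' (k+1) := by
    intro k
    induction k with
    | zero =>
      intro X
      have hmp1 : mpow m' e' X0' 1 = X0' := by
        show m' X0' e' = X0'
        rw [hF'.comm]; exact hF'.unit X0'
      rw [hmp1]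
      linear_combination hA X - X * hWX
    | succ k ih =>
      intro X
      set pk := mpow m' e' X0' (k+1) with hpk
      have hmp : mpow m' e' X0' (k+1+1) = X0' * pk := by
        rw [hpk]; exact hm' X0' _
      rw [hmp]
      have c1 := (h1c X X0' pk).1
      have c0 := (h0c X X0' pk).1
      simp only [covMul, hm'] at c1 c0
      linear_combination c1 - c0 + pk * hA X + X0' * ih X + hDx (X*pk)
        - pk * hDx X - X * hDx pk
  refine ⟨Wd, fun X Y => ?_⟩
  let f1 : V →ₗ[R] V :=
    { toFun := fun U => nd X U - nd0 X U
      map_add' := fun u v => by simp only [h1.add_right, h0.add_right]; abel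
      map_smul' := fun f u => by
        simp only [RingHom.id_apply, h1.leibniz, h0.leibniz, smul_sub]; abel }
  let f2 : V →ₗ[R] V :=
    { toFun := fun U => m' (m' Wd X) U
      map_add' := fun u v => madd_r _ u v
      map_smul' := fun f u => by simp only [RingHom.id_apply]; exact msmul_r f _ u }
  have hfe : f1 = f2 := by
    refine b.ext fun i => ?_
    show nd X (b i) - nd0 X (b i) = m' (m' Wd X) (b i)
    rw [hb i]
    exact hpow (i : ℕ) X
  have hXY : nd X Y - nd0 X Y = m' (m' Wd X) Y := LinearMap.congr_fun hfe Y
  linear_combination hXY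

/-- **Example 5.6 ii.** In the setting of the previous example,
the dual `D_ε(S̃)` of the special family `S̃` of all torsion-free
`∘`-compatible connections with `∇̃_Y(X₀)∘Z = ∇̃_Z(X₀)∘Y` equals the special
family of all torsion-free connections on the dual F-manifold `(M, *, ε)`
compatible with `*` and satisfying `∇_Y(ε∘X₀)*Z = ∇_Z(ε∘X₀)*Y`. -/
theorem statement9 {R V : Type*} [CommRing R] [LieRing V] [Module R V]
    (S : SmoothSetting R V) (m : V → V → V) (e ε εinv : V)
    (hF : IsFManifold R m e) (hev : IsEventualIdentity R m e ε εinv)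
    (n : ℕ) (X0 : V)
    (hframe : ∃ b : Module.Basis (Fin n) R V, ∀ i : Fin n, b i = mpow m e X0 ((i : ℕ) + 1))
    (hex : ∃ nt : V → V → V, IsConnection S nt ∧ IsTorsionFree nt ∧
      IsCompatible nt m ∧ ∀ Y Z : V, m (nt Y X0) Z = m (nt Z X0) Y) :
    dualFamilyOfSet m ε εinv
        { nt : V → V → V | IsConnection S nt ∧ IsTorsionFree nt ∧
          IsCompatible nt m ∧ ∀ Y Z : V, m (nt Y X0) Z = m (nt Z X0) Y } =
      { nd : V → V → V | IsConnection S nd ∧ IsTorsionFree nd ∧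
        IsCompatible nd (dualMul m εinv) ∧
        ∀ Y Z : V, dualMul m εinv (nd Y (m ε X0)) Z =
          dualMul m εinv (nd Z (m ε X0)) Y } := by
  obtain ⟨nt0, hnt0c, hnt0t, hnt0m, hnt0x⟩ := hex
  obtain ⟨b, hbb⟩ := hframe
  have hfwd := forward_aux S m e ε εinv hF hev.1 hev.2 X0
  ext nd
  simp only [dualFamilyOfSet, Set.mem_setOf_eq]
  constructor
  · rintro ⟨nt, ⟨h1, h2, h3, h4⟩, W, rfl⟩
    exact hfwd nt h1 h2 h3 h4 W
  · intro hnd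
    have madd_r : ∀ X Y Z : V, m X (Y + Z) = m X Y + m X Z := fun X Y Z => by
      rw [hF.comm X (Y+Z), hF.add_left, hF.comm Y X, hF.comm Z X]
    have msmul_r : ∀ (f : R) (X Y : V), m X (f • Y) = f • m X Y := fun f X Y => by
      rw [hF.comm X (f • Y), hF.smul_left, hF.comm Y X]
    letI : CommRing V := fmRing hF
    have hm : ∀ X Y : V, m X Y = X * Y := fun _ _ => rfl
    have hε : ε * εinv = 1 := hev.1
    have hmpow : ∀ k : ℕ, mpow (dualMul m εinv) ε (m ε X0) k = m ε (mpow m e X0 k) := by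
      intro k
      induction k with
      | zero =>
        show ε = m ε e
        rw [hF.comm]; exact (hF.unit ε).symm
      | succ k ih =>
        show dualMul m εinv (m ε X0) (mpow (dualMul m εinv) ε (m ε X0) k)
            = m ε (m X0 (mpow m e X0 k))
        rw [ih]
        simp only [dualMul, hm]
        linear_combination (ε * X0 * mpow m e X0 k) * hε
    let φ : V →ₗ[R] V :=
      { toFun := fun v => m ε v
        map_add' := fun u v => madd_r ε u v
        map_smul' := fun f v => by simp only [RingHom.id_apply]; exact msmul_r f ε v }
    let ψ : V ≃ₗ[R] V :=
      { φ with
        invFun := fun v => m εinv v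
        left_inv := fun v => by
          show m εinv (m ε v) = v
          rw [← hF.assoc, hF.comm εinv ε, hev.1, hF.unit]
        right_inv := fun v => by
          show m ε (m εinv v) = v
          rw [← hF.assoc, hev.1, hF.unit] }
    let bd := b.map ψ
    have hbd : ∀ i : Fin n, bd i = mpow (dualMul m εinv) ε (m ε X0) ((i : ℕ) + 1) := by
      intro i
      show (b.map ψ) i = _
      rw [Module.Basis.map_apply]
      show m ε (b i) = _
      rw [hbb i]
      exact (hmpow _).symm
    have h0 := hfwd nt0 hnt0c hnt0t hnt0m hnt0x 0
    obtain ⟨Wd, hWd⟩ := special_diff S (dualMul m εinv) ε hev.2 n (m ε X0) bd hbd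
      (dualConn m ε εinv nt0 0) nd h0.1 h0.2.1 h0.2.2.1 h0.2.2.2
      hnd.1 hnd.2.1 hnd.2.2.1 hnd.2.2.2
    refine ⟨nt0, ⟨hnt0c, hnt0t, hnt0m, hnt0x⟩, Wd, ?_⟩
    funext X Y
    rw [hWd X Y]
    simp only [dualConn, dualMul, hm]
    ring
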